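/- Let β ∈ ℝ₊^{n−1} with β_2 > 0 and let μ be the counting measure. Then P_β satisfies blockwise Pareto winners and blockwise Pareto losers: for every profile V = (v¹,…,vᵐ) and every k ∈ [n], (1) if vʲ([k]) = vʲ'([k]) for all j, j' ∈ [m], then every v ∈ P_β(V) satisfies v([k]) = v¹([k]); and (2) if vʲ([k]ᶜ) = vʲ'([k]ᶜ) for all j, j' ∈ [m] (where v([k]ᶜ) := {v_{k+1},…,v_n}), then every v ∈ P_β(V) satisfies v([k]ᶜ) = v¹([k]ᶜ). -/

import Mathlib

open Finset

noncomputable section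

/-- `i >_σ j`: candidate `i` is ranked above candidate `j` by `σ`
(where `σ i` is the candidate in position `i`). -/
def prefOver {n : ℕ} (σ : Equiv.Perm (Fin n)) (i j : Fin n) : Prop :=
  σ.symm i < σ.symm j

/-- `M(S,σ)`: the set of `>_σ`-maximal elements of `S` (a singleton when `S ≠ ∅`). -/
def bestSet {n : ℕ} (σ : Equiv.Perm (Fin n)) (S : Finset (Fin n)) : Finset (Fin n) :=
  S.filter fun x => ∀ y ∈ S, σ.symm x ≤ σ.symm y

/-- `△_S(σ,π) = M(S,σ) △ M(S,π)`. -/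
def topDiff {n : ℕ} (σ π : Equiv.Perm (Fin n)) (S : Finset (Fin n)) : Finset (Fin n) :=
  symmDiff (bestSet σ S) (bestSet π S)

/-- The `(β,μ)`-top-difference distance; `β i` is the weight of menus of size `i+2`. -/
def dTD (n : ℕ) (β : Fin (n - 1) → ℝ) (μ : Fin n → ℝ)
    (σ π : Equiv.Perm (Fin n)) : ℝ :=
  ∑ S ∈ Finset.univ.filter (fun S : Finset (Fin n) => 2 ≤ S.card),
    (if h : S.card - 2 < n - 1 then β ⟨S.card - 2, h⟩ else 0) *
      ∑ x ∈ topDiff σ π S, μ x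

def IsSemimetric {α : Type*} (d : α → α → ℝ) : Prop :=
  (∀ x y, 0 ≤ d x y) ∧ (∀ x y, d x y = d y x) ∧ (∀ x, d x x = 0) ∧
    (∀ x y z, d x z ≤ d x y + d y z)

def IsMetricFn {α : Type*} (d : α → α → ℝ) : Prop :=
  IsSemimetric d ∧ ∀ x y, d x y = 0 → x = y

/-- Cumulative distance of `σ` to a profile of voters. -/
def dProf (n : ℕ) (β : Fin (n - 1) → ℝ) (μ : Fin n → ℝ)
    (σ : Equiv.Perm (Fin n)) (V : List (Equiv.Perm (Fin n))) : ℝ :=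
  (V.map (dTD n β μ σ)).sum

/-- The median preference correspondence `P^μ_β`. -/
def Pmed (n : ℕ) (β : Fin (n - 1) → ℝ) (μ : Fin n → ℝ)
    (V : List (Equiv.Perm (Fin n))) : Set (Equiv.Perm (Fin n)) :=
  {σ | ∀ τ : Equiv.Perm (Fin n), dProf n β μ σ V ≤ dProf n β μ τ V}

/-- The winner set `W^μ_β`: candidates ranked first by some consensus ranking. -/
def Wmed (n : ℕ) (hn : 0 < n) (β : Fin (n - 1) → ℝ) (μ : Fin n → ℝ)
    (V : List (Equiv.Perm (Fin n))) : Set (Fin n) :=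
  {c | ∃ σ ∈ Pmed n β μ V, σ ⟨0, hn⟩ = c}

/-- `σ([k])`: the set of candidates in the first `k` positions of `σ`. -/
def firstK {n : ℕ} (σ : Equiv.Perm (Fin n)) (k : ℕ) : Finset (Fin n) :=
  Finset.univ.filter fun c => (σ.symm c : ℕ) < k

/-- `σ([k]ᶜ)`: the set of candidates in positions `k+1,…,n` of `σ`. -/
def lastCoK {n : ℕ} (σ : Equiv.Perm (Fin n)) (k : ℕ) : Finset (Fin n) :=
  Finset.univ.filter fun c => k ≤ (σ.symm c : ℕ)



lemma card_filter_lt' {n : ℕ} (m : ℕ) (h : m ≤ n) :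
    ((univ : Finset (Fin n)).filter fun p : Fin n => (p : ℕ) < m).card = m := by
  rw [show ((univ : Finset (Fin n)).filter fun p : Fin n => (p:ℕ) < m)
      = (univ : Finset (Fin m)).map ⟨Fin.castLE h, Fin.castLE_injective h⟩ by
    ext c
    simp only [mem_filter, mem_map, mem_univ, true_and, Function.Embedding.coeFn_mk]
    constructor
    · intro hc; exact ⟨⟨c, hc⟩, rfl⟩
    · rintro ⟨a, rfl⟩; exact a.2]
  simp

lemma firstK_card' {n : ℕ} (σ : Equiv.Perm (Fin n)) (k : ℕ) (h : k ≤ n) :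
    (firstK σ k).card = k := by
  rw [show firstK σ k = ((univ : Finset (Fin n)).filter fun p : Fin n => (p:ℕ) < k).map
      σ.toEmbedding by
    ext c
    simp only [firstK, mem_filter, mem_map, mem_univ, true_and,
      Equiv.coe_toEmbedding]
    constructor
    · intro hc; exact ⟨σ.symm c, hc, σ.apply_symm_apply c⟩
    · rintro ⟨p, hp, rfl⟩; simpa using hp]
  rw [Finset.card_map, card_filter_lt' k h]

lemma bestSet_eq_singleton' {n : ℕ} (σ : Equiv.Perm (Fin n)) {S : Finset (Fin n)}
    {b : Fin n} (hb : b ∈ S) (hmin : ∀ c ∈ S, σ.symm b ≤ σ.symm c) :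
    bestSet σ S = {b} := by
  ext c
  simp only [bestSet, mem_filter, mem_singleton]
  constructor
  · rintro ⟨hcS, hc⟩
    exact σ.symm.injective (le_antisymm (hc b hb) (hmin c hcS))
  · rintro rfl; exact ⟨hb, hmin⟩

lemma swap_adj' {n : ℕ} {p p' a b : Fin n} (hpp : (p' : ℕ) = (p:ℕ) + 1)
    (hab : a < b) (h : Equiv.swap p p' b ≤ Equiv.swap p p' a) :
    a = p ∧ b = p' := by
  simp only [Equiv.swap_apply_def] at h
  split_ifs at h <;>
    simp only [Fin.ext_iff, Fin.le_def, Fin.lt_def] at * <;> omega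

lemma symmDiff_singleton_card' {α : Type*} [DecidableEq α] (a b : α) :
    (symmDiff ({a} : Finset α) {b}).card = if a = b then 0 else 2 := by
  rcases eq_or_ne a b with rfl | hab
  · simp
  · rw [if_neg hab]
    have h : symmDiff ({a} : Finset α) {b} = {a, b} := by
      ext c
      simp only [Finset.mem_symmDiff, mem_singleton, mem_insert]
      constructor
      · rintro (⟨rfl, -⟩ | ⟨rfl, -⟩) <;> simp
      · rintro (rfl | rfl)
        · exact Or.inl ⟨rfl, hab⟩
        · exact Or.inr ⟨rfl, fun hc => hab hc.symm⟩
    rw [h, Finset.card_pair hab]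

lemma dTD_swap_lt' {n : ℕ} (hn : 2 ≤ n) (β : Fin (n-1) → ℝ) (hβ : ∀ j, 0 ≤ β j)
    (hβ2 : 0 < β ⟨0, Nat.sub_pos_of_lt hn⟩)
    (w u : Equiv.Perm (Fin n)) (p p' : Fin n) (hpp : (p':ℕ) = (p:ℕ)+1)
    (hu : u.symm (w p') < u.symm (w p)) :
    dTD n β (fun _ => 1) (w * Equiv.swap p p') u < dTD n β (fun _ => 1) w u := by
  set x := w p with hx
  set y := w p' with hy
  have hpne : p ≠ p' := by
    intro h; rw [h] at hpp; omega
  have hxy : x ≠ y := fun h => hpne (w.injective h)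
  set w' := w * Equiv.swap p p' with hw'
  have hsymm : ∀ c, w'.symm c = Equiv.swap p p' (w.symm c) := by
    intro c
    simp [hw', Equiv.Perm.mul_def, Equiv.symm_trans_apply]
  have hwx : w.symm x = p := w.symm_apply_apply p
  have hwy : w.symm y = p' := w.symm_apply_apply p'
  have hw'x : w'.symm x = p' := by rw [hsymm, hwx, Equiv.swap_apply_left]
  have hw'y : w'.symm y = p := by rw [hsymm, hwy, Equiv.swap_apply_right]
  have hplt : p < p' := by rw [Fin.lt_def]; omega
  unfold dTD
  refine Finset.sum_lt_sum ?_ ⟨{x, y}, ?_, ?_⟩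
  · intro S hS
    simp only [mem_filter, mem_univ, true_and] at hS
    have hSne : S.Nonempty := card_pos.mp (by omega)
    obtain ⟨bw, hbwS, hbw⟩ := S.exists_min_image (fun c => w.symm c) hSne
    obtain ⟨bw', hbw'S, hbw'⟩ := S.exists_min_image (fun c => w'.symm c) hSne
    obtain ⟨bu, hbuS, hbu⟩ := S.exists_min_image (fun c => u.symm c) hSne
    rw [show topDiff w' u S = symmDiff {bw'} {bu} by
        rw [topDiff, bestSet_eq_singleton' w' hbw'S hbw', bestSet_eq_singleton' u hbuS hbu],
      show topDiff w u S = symmDiff {bw} {bu} by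
        rw [topDiff, bestSet_eq_singleton' w hbwS hbw, bestSet_eq_singleton' u hbuS hbu]]
    rw [Finset.sum_const, Finset.sum_const, nsmul_eq_mul, nsmul_eq_mul, mul_one, mul_one]
    apply mul_le_mul_of_nonneg_left _ (by split; exacts [hβ _, le_rfl])
    rw [symmDiff_singleton_card', symmDiff_singleton_card']
    by_cases hb : bw' = bw
    · rw [hb]
    · have hlt1 : w.symm bw < w.symm bw' :=
        lt_of_le_of_ne (hbw bw' hbw'S) (fun h => hb (w.symm.injective h.symm))
      have hle2 : Equiv.swap p p' (w.symm bw') ≤ Equiv.swap p p' (w.symm bw) := by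
        rw [← hsymm, ← hsymm]; exact hbw' bw hbwS
      obtain ⟨e1, e2⟩ := swap_adj' hpp hlt1 hle2
      have hbwx : bw = x := by rw [hx, ← e1, w.apply_symm_apply]
      have hbw'y : bw' = y := by rw [hy, ← e2, w.apply_symm_apply]
      have hbune : bw ≠ bu := by
        intro h
        have h1 : u.symm bu ≤ u.symm bw' := hbu bw' hbw'S
        rw [← h, hbwx, hbw'y] at h1
        exact absurd h1 (not_le.mpr hu)
      rw [if_neg (fun h : bw = bu => hbune h)]
      split_ifs <;> norm_num
  · simp only [mem_filter, mem_univ, true_and]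
    rw [Finset.card_pair hxy]
  · have hmemxy : ∀ c ∈ ({x, y} : Finset (Fin n)), c = x ∨ c = y := by
      intro c hc
      simpa [mem_insert, mem_singleton] using hc
    have hbw : bestSet w {x, y} = {x} := by
      apply bestSet_eq_singleton' w (mem_insert_self x {y})
      intro c hc
      rcases hmemxy c hc with rfl | rfl
      · exact le_refl _
      · rw [hwx, hwy]; exact le_of_lt hplt
    have hbw' : bestSet w' {x, y} = {y} := by
      apply bestSet_eq_singleton' w' (mem_insert_of_mem (mem_singleton_self y))
      intro c hc
      rcases hmemxy c hc with rfl | rfl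
      · rw [hw'x, hw'y]; exact le_of_lt hplt
      · exact le_refl _
    have hbu : bestSet u {x, y} = {y} := by
      apply bestSet_eq_singleton' u (mem_insert_of_mem (mem_singleton_self y))
      intro c hc
      rcases hmemxy c hc with rfl | rfl
      · exact le_of_lt hu
      · exact le_refl _
    rw [show topDiff w' u {x,y} = symmDiff ({y} : Finset (Fin n)) {y} by
        rw [topDiff, hbw', hbu],
      show topDiff w u {x,y} = symmDiff ({x} : Finset (Fin n)) {y} by
        rw [topDiff, hbw, hbu]]
    rw [symmDiff_self]
    have hcard : ({x, y} : Finset (Fin n)).card = 2 := Finset.card_pair hxy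
    rw [hcard]
    have hcond : 2 - 2 < n - 1 := by omega
    rw [dif_pos hcond]
    have hsum : ∑ z ∈ symmDiff ({x} : Finset (Fin n)) {y}, (1:ℝ) = 2 := by
      rw [Finset.sum_const, nsmul_eq_mul, mul_one, symmDiff_singleton_card', if_neg hxy]
      norm_num
    rw [hsum]
    simp only [Finset.bot_eq_empty, Finset.sum_empty, mul_zero]
    have : β ⟨2 - 2, hcond⟩ = β ⟨0, by omega⟩ := rfl
    rw [this]
    positivity

lemma exists_adj' {n k : ℕ} (hk2 : k ≤ n) (w : Equiv.Perm (Fin n)) (A : Finset (Fin n))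
    (hA : A.card = k) (hne : firstK w k ≠ A) :
    ∃ (i : ℕ) (h : i + 1 < n), w ⟨i, by omega⟩ ∉ A ∧ w ⟨i+1, h⟩ ∈ A := by
  by_contra hno
  push_neg at hno
  have down : ∀ j (hj : j < n), w ⟨j, hj⟩ ∈ A → ∀ i (hi : i ≤ j), w ⟨i, by omega⟩ ∈ A := by
    intro j
    induction j with
    | zero =>
      intro hj hmem i hi
      have : i = 0 := by omega
      subst this; exact hmem
    | succ j ih =>
      intro hj hmem i hi
      have hjA : w ⟨j, by omega⟩ ∈ A := by
        by_contra hnot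
        exact (hno j hj hnot) hmem
      rcases Nat.lt_or_ge i (j+1) with h | h
      · exact ih (by omega) hjA i (by omega)
      · have : i = j + 1 := by omega
        subst this; exact hmem
  apply hne
  have hTcard : ((univ : Finset (Fin n)).filter fun pos : Fin n => w pos ∈ A).card = k := by
    rw [show ((univ : Finset (Fin n)).filter fun pos : Fin n => w pos ∈ A)
        = A.map w.symm.toEmbedding by
      ext q
      simp only [mem_filter, mem_univ, true_and, mem_map, Equiv.coe_toEmbedding]
      constructor
      · intro hq; exact ⟨w q, hq, w.symm_apply_apply q⟩
      · rintro ⟨c, hc, rfl⟩; simpa using hc]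
    rw [Finset.card_map, hA]
  have hTsub : ((univ : Finset (Fin n)).filter fun pos : Fin n => w pos ∈ A)
      ⊆ (univ : Finset (Fin n)).filter fun pos : Fin n => (pos : ℕ) < k := by
    intro t ht
    simp only [mem_filter, mem_univ, true_and] at ht ⊢
    by_contra hkt
    push_neg at hkt
    have hsub2 : ((univ : Finset (Fin n)).filter fun pos : Fin n => (pos : ℕ) < (t:ℕ)+1)
        ⊆ (univ : Finset (Fin n)).filter fun pos : Fin n => w pos ∈ A := by
      intro q hq
      simp only [mem_filter, mem_univ, true_and] at hq ⊢
      have := down t t.isLt (by simpa using ht) q (by omega)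
      simpa using this
    have hc2 := Finset.card_le_card hsub2
    rw [card_filter_lt' ((t:ℕ)+1) t.isLt, hTcard] at hc2
    omega
  have hTeq := Finset.eq_of_subset_of_card_le hTsub
    (by rw [hTcard, card_filter_lt' k hk2])
  ext c
  simp only [firstK, mem_filter, mem_univ, true_and]
  constructor
  · intro hc
    have : w.symm c ∈ (univ : Finset (Fin n)).filter fun pos : Fin n => w pos ∈ A := by
      rw [hTeq]; simp only [mem_filter, mem_univ, true_and]; exact hc
    simpa [w.apply_symm_apply] using this
  · intro hc
    have : w.symm c ∈ (univ : Finset (Fin n)).filter fun pos : Fin n => (pos : ℕ) < k := by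
      rw [← hTeq]; simp [w.apply_symm_apply, hc]
    simpa using this

lemma part1' (n : ℕ) (hn : 2 ≤ n) (β : Fin (n - 1) → ℝ)
    (hβ : ∀ j, 0 ≤ β j) (hβ2 : 0 < β ⟨0, Nat.sub_pos_of_lt hn⟩)
    (v₁ : Equiv.Perm (Fin n)) (V : List (Equiv.Perm (Fin n)))
    (k : ℕ) (hk2 : k ≤ n)
    (hagree : ∀ u ∈ v₁ :: V, firstK u k = firstK v₁ k)
    (w : Equiv.Perm (Fin n)) (hw : w ∈ Pmed n β (fun _ => (1 : ℝ)) (v₁ :: V)) :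
    firstK w k = firstK v₁ k := by
  by_contra hne
  obtain ⟨i, hi, hxA, hyA⟩ := exists_adj' hk2 w _ (firstK_card' v₁ k hk2) hne
  set p : Fin n := ⟨i, by omega⟩ with hp
  set p' : Fin n := ⟨i+1, hi⟩ with hp'
  set w' := w * Equiv.swap p p' with hw'def
  have hvoter : ∀ u ∈ v₁ :: V,
      dTD n β (fun _ => 1) w' u < dTD n β (fun _ => 1) w u := by
    intro u hu
    apply dTD_swap_lt' hn β hβ hβ2 w u p p' (by simp [hp, hp'])
    have h1 : w p' ∈ firstK u k := by rw [hagree u hu]; exact hyA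
    have h2 : w p ∉ firstK u k := by rw [hagree u hu]; exact hxA
    simp only [firstK, mem_filter, mem_univ, true_and, not_lt] at h1 h2
    rw [Fin.lt_def]; omega
  have hlt : dProf n β (fun _ => 1) w' (v₁ :: V) < dProf n β (fun _ => 1) w (v₁ :: V) := by
    unfold dProf
    simp only [List.map_cons, List.sum_cons]
    have h1 := hvoter v₁ List.mem_cons_self
    have h2 : (V.map (dTD n β (fun _ => 1) w')).sum ≤ (V.map (dTD n β (fun _ => 1) w)).sum :=
      List.sum_le_sum (fun u hu => le_of_lt (hvoter u (List.mem_cons_of_mem v₁ hu)))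
    linarith
  exact absurd (hw w') (not_le.mpr hlt)

lemma lastCoK_compl {n : ℕ} (σ : Equiv.Perm (Fin n)) (k : ℕ) :
    lastCoK σ k = (firstK σ k)ᶜ := by
  ext c
  simp [lastCoK, firstK, not_lt]


theorem stmt15 (n : ℕ) (hn : 2 ≤ n) (β : Fin (n - 1) → ℝ)
    (hβ : ∀ k, 0 ≤ β k) (hβ2 : 0 < β ⟨0, by omega⟩)
    (v₁ : Equiv.Perm (Fin n)) (V : List (Equiv.Perm (Fin n)))
    (k : ℕ) (hk1 : 1 ≤ k) (hk2 : k ≤ n) :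
    ((∀ u ∈ v₁ :: V, firstK u k = firstK v₁ k) →
      ∀ w ∈ Pmed n β (fun _ => (1 : ℝ)) (v₁ :: V), firstK w k = firstK v₁ k) ∧
    ((∀ u ∈ v₁ :: V, lastCoK u k = lastCoK v₁ k) →
      ∀ w ∈ Pmed n β (fun _ => (1 : ℝ)) (v₁ :: V), lastCoK w k = lastCoK v₁ k) := by
  constructor
  · intro hagree w hw
    exact part1' n hn β hβ hβ2 v₁ V k hk2 hagree w hw
  · intro hagree w hw
    have hagree' : ∀ u ∈ v₁ :: V, firstK u k = firstK v₁ k := by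
      intro u hu
      have := hagree u hu
      rw [lastCoK_compl, lastCoK_compl] at this
      exact compl_injective this
    rw [lastCoK_compl, lastCoK_compl]
    rw [part1' n hn β hβ hβ2 v₁ V k hk2 hagree' w hw]
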